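/- Assume Z_0 := Σ_{ζ∈Λ} ∫ exp(−U(ζ,q)) dμ(q) is also finite and positive, and let O : Λ × 𝒬 → ℝ be measurable with (ζ,q) ↦ O(ζ,q)·exp(−U(ζ,q)) integrable over Λ × 𝒬. Then the unbiased total expectation is recovered from biased sampling through the modified generic weighing functions: E[O] = E_a[(ζ,q) ↦ Σ_{λ∈Λ} O(λ,q) 𝕘_a^λ(ζ,q)] / E_a[𝕘_a]. In particular, taking O(ζ,q) = 1_{ζ=λ} yields exp(−A(λ)) := E[1_λ] = E_a[𝕘_a^λ] / E_a[𝕘_a], the free energy along the external parameter. -/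

import Mathlib

open MeasureTheory Real Finset

namespace ExpandedEnsemble

variable {Λ Q : Type*}

/-- Partition function of the expanded ensemble with biasing potential `a`. -/
noncomputable def Za [Fintype Λ] [MeasurableSpace Q] (μ : Measure Q)
    (U : Λ → Q → ℝ) (a : Λ → ℝ) : ℝ :=
  ∑ ζ : Λ, ∫ q, Real.exp (a ζ - U ζ q) ∂μ

/-- Expanded-ensemble probability density `p_a(ζ,q) = exp(a(ζ) − U(ζ,q))/Z_a`. -/
noncomputable def pEE [Fintype Λ] [MeasurableSpace Q] (μ : Measure Q)
    (U : Λ → Q → ℝ) (a : Λ → ℝ) (ζ : Λ) (q : Q) : ℝ :=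
  Real.exp (a ζ - U ζ q) / Za μ U a

/-- Expectation `E_a[F] = Σ_ζ ∫ F(ζ,q) p_a(ζ,q) dμ(q)` in the expanded ensemble. -/
noncomputable def Ea [Fintype Λ] [MeasurableSpace Q] (μ : Measure Q)
    (U : Λ → Q → ℝ) (a : Λ → ℝ) (F : Λ → Q → ℝ) : ℝ :=
  ∑ ζ : Λ, ∫ q, F ζ q * pEE μ U a ζ q ∂μ

/-- Marginal probability of the external parameter, `p_a^Λ(λ) = ∫ p_a(λ,q) dμ(q)`. -/
noncomputable def pLam [Fintype Λ] [MeasurableSpace Q] (μ : Measure Q)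
    (U : Λ → Q → ℝ) (a : Λ → ℝ) (l : Λ) : ℝ :=
  ∫ q, pEE μ U a l q ∂μ

/-- Marginal probability of the configuration, `p_a^𝒬(q) = Σ_ζ p_a(ζ,q)`. -/
noncomputable def pQm [Fintype Λ] [MeasurableSpace Q] (μ : Measure Q)
    (U : Λ → Q → ℝ) (a : Λ → ℝ) (q : Q) : ℝ :=
  ∑ ζ : Λ, pEE μ U a ζ q

/-- Generic weighing function `g_a^λ(ζ,q) = (p_a(λ,q)/p_a(ζ,q)) K(λ,ζ)`. -/
noncomputable def gW [Fintype Λ] [MeasurableSpace Q] (μ : Measure Q)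
    (U : Λ → Q → ℝ) (a : Λ → ℝ) (K : Λ → Λ → ℝ) (l ζ : Λ) (q : Q) : ℝ :=
  (pEE μ U a l q / pEE μ U a ζ q) * K l ζ

/-- Conditional probability of `λ` given `q`:
`π_a^λ(q) = exp(a(λ) − U(λ,q)) / Σ_ζ exp(a(ζ) − U(ζ,q))`. -/
noncomputable def piL [Fintype Λ] (U : Λ → Q → ℝ) (a : Λ → ℝ) (l : Λ) (q : Q) : ℝ :=
  Real.exp (a l - U l q) / ∑ ζ : Λ, Real.exp (a ζ - U ζ q)

/-- Conditional expectation of the observable given `λ`: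
`E[O|λ] = ∫ O(λ,q) π(q|λ) dμ(q)` with `π(q|λ) = p_a(λ,q)/p_a^Λ(λ)`. -/
noncomputable def condE [Fintype Λ] [MeasurableSpace Q] (μ : Measure Q)
    (U : Λ → Q → ℝ) (a : Λ → ℝ) (O : Λ → Q → ℝ) (l : Λ) : ℝ :=
  ∫ q, O l q * (pEE μ U a l q / pLam μ U a l) ∂μ

/-- Variance `Var_a[F] = E_a[F²] − (E_a[F])²`. -/
noncomputable def VarA [Fintype Λ] [MeasurableSpace Q] (μ : Measure Q)
    (U : Λ → Q → ℝ) (a : Λ → ℝ) (F : Λ → Q → ℝ) : ℝ :=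
  Ea μ U a (fun ζ q => F ζ q ^ 2) - (Ea μ U a F) ^ 2

/-- Conditional weight `w_a(ζ,q) = p_a(ζ,q)/p_a^𝒬(q)`. -/
noncomputable def wA [Fintype Λ] [MeasurableSpace Q] (μ : Measure Q)
    (U : Λ → Q → ℝ) (a : Λ → ℝ) (ζ : Λ) (q : Q) : ℝ :=
  pEE μ U a ζ q / pQm μ U a q

/-- Conditional variance of `F` given `q`. -/
noncomputable def condVar [Fintype Λ] [MeasurableSpace Q] (μ : Measure Q)
    (U : Λ → Q → ℝ) (a : Λ → ℝ) (F : Λ → Q → ℝ) (q : Q) : ℝ :=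
  ∑ ζ : Λ, F ζ q ^ 2 * wA μ U a ζ q - (∑ ζ : Λ, F ζ q * wA μ U a ζ q) ^ 2

/-- Expectation with respect to the marginal of `q`: `E_a^𝒬[h] = ∫ h(q) p_a^𝒬(q) dμ(q)`. -/
noncomputable def EQm [Fintype Λ] [MeasurableSpace Q] (μ : Measure Q)
    (U : Λ → Q → ℝ) (a : Λ → ℝ) (h : Q → ℝ) : ℝ :=
  ∫ q, h q * pQm μ U a q ∂μ

/-- Variance with respect to the marginal of `q`. -/
noncomputable def VarQ [Fintype Λ] [MeasurableSpace Q] (μ : Measure Q)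
    (U : Λ → Q → ℝ) (a : Λ → ℝ) (h : Q → ℝ) : ℝ :=
  EQm μ U a (fun q => h q ^ 2) - (EQm μ U a h) ^ 2

/-- Partition function of the unbiased expanded ensemble. -/
noncomputable def Z0 [Fintype Λ] [MeasurableSpace Q] (μ : Measure Q)
    (U : Λ → Q → ℝ) : ℝ :=
  ∑ ζ : Λ, ∫ q, Real.exp (-U ζ q) ∂μ

/-- Unbiased expanded-ensemble density `p_0(ζ,q) = exp(−U(ζ,q))/Z_0`. -/
noncomputable def p0 [Fintype Λ] [MeasurableSpace Q] (μ : Measure Q)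
    (U : Λ → Q → ℝ) (ζ : Λ) (q : Q) : ℝ :=
  Real.exp (-U ζ q) / Z0 μ U

/-- Unbiased total expectation `E[O] = Σ_ζ ∫ O(ζ,q) p_0(ζ,q) dμ(q)`. -/
noncomputable def E0 [Fintype Λ] [MeasurableSpace Q] (μ : Measure Q)
    (U : Λ → Q → ℝ) (O : Λ → Q → ℝ) : ℝ :=
  ∑ ζ : Λ, ∫ q, O ζ q * p0 μ U ζ q ∂μ

/-- Modified generic weighing function `𝕘_a^λ(ζ,q) = exp(−a(λ)) g_a^λ(ζ,q)`. -/
noncomputable def gMod [Fintype Λ] [MeasurableSpace Q] (μ : Measure Q)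
    (U : Λ → Q → ℝ) (a : Λ → ℝ) (K : Λ → Λ → ℝ) (l ζ : Λ) (q : Q) : ℝ :=
  Real.exp (-a l) * gW μ U a K l ζ q

/-- Total modified weighing function `𝕘_a = Σ_λ 𝕘_a^λ`. -/
noncomputable def gModT [Fintype Λ] [MeasurableSpace Q] (μ : Measure Q)
    (U : Λ → Q → ℝ) (a : Λ → ℝ) (K : Λ → Λ → ℝ) (ζ : Λ) (q : Q) : ℝ :=
  ∑ l : Λ, gMod μ U a K l ζ q

/-- Conditioned modified weighing function
`𝕟_a^λ(q) = exp(−U(λ,q)) / Σ_ζ exp(a(ζ) − U(ζ,q))`. -/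
noncomputable def nMod [Fintype Λ] (U : Λ → Q → ℝ) (a : Λ → ℝ) (l : Λ) (q : Q) : ℝ :=
  Real.exp (-U l q) / ∑ ζ : Λ, Real.exp (a ζ - U ζ q)

/-- Total conditioned modified weighing function `𝕟_a = Σ_λ 𝕟_a^λ`. -/
noncomputable def nModT [Fintype Λ] (U : Λ → Q → ℝ) (a : Λ → ℝ) (q : Q) : ℝ :=
  ∑ l : Λ, nMod U a l q

end ExpandedEnsemble

open MeasureTheory ExpandedEnsemble

lemma ee_key {Λ Q : Type*} [Fintype Λ] [MeasurableSpace Q]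
    (μ : Measure Q) (U : Λ → Q → ℝ) (a : Λ → ℝ)
    (hZ : 0 < Za μ U a)
    (K : Λ → Λ → ℝ) (hK : ∀ l : Λ, ∑ ζ : Λ, K l ζ = 1)
    (O : Λ → Q → ℝ)
    (hOint : ∀ ζ, Integrable (fun q => O ζ q * Real.exp (-U ζ q)) μ) :
    Ea μ U a (fun ζ q => ∑ l : Λ, O l q * gMod μ U a K l ζ q)
      = (∑ l : Λ, ∫ q, O l q * Real.exp (-U l q) ∂μ) / Za μ U a := by
  have hZne : Za μ U a ≠ 0 := ne_of_gt hZ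
  unfold Ea
  have hpt : ∀ (ζ : Λ) (q : Q),
      (∑ l : Λ, O l q * gMod μ U a K l ζ q) * pEE μ U a ζ q
        = ∑ l : Λ, (O l q * Real.exp (-U l q)) * (K l ζ / Za μ U a) := by
    intro ζ q
    rw [Finset.sum_mul]
    refine Finset.sum_congr rfl fun l _ => ?_
    simp only [gMod, gW, pEE, Real.exp_sub, Real.exp_neg]
    field_simp
  have hint : ∀ (ζ : Λ),
      (∫ q, (∑ l : Λ, O l q * gMod μ U a K l ζ q) * pEE μ U a ζ q ∂μ)
        = ∑ l : Λ, (∫ q, O l q * Real.exp (-U l q) ∂μ) * (K l ζ / Za μ U a) := by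
    intro ζ
    rw [show (fun q => (∑ l : Λ, O l q * gMod μ U a K l ζ q) * pEE μ U a ζ q)
        = fun q => ∑ l : Λ, (O l q * Real.exp (-U l q)) * (K l ζ / Za μ U a) from
      funext fun q => hpt ζ q]
    rw [integral_finset_sum _ (fun l _ => (hOint l).mul_const _)]
    exact Finset.sum_congr rfl fun l _ => integral_mul_const _ _
  calc ∑ ζ : Λ, ∫ q, (∑ l : Λ, O l q * gMod μ U a K l ζ q) * pEE μ U a ζ q ∂μ
      = ∑ ζ : Λ, ∑ l : Λ, (∫ q, O l q * Real.exp (-U l q) ∂μ) * (K l ζ / Za μ U a) := by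
        exact Finset.sum_congr rfl fun ζ _ => hint ζ
    _ = ∑ l : Λ, ∑ ζ : Λ, (∫ q, O l q * Real.exp (-U l q) ∂μ) * (K l ζ / Za μ U a) :=
        Finset.sum_comm
    _ = ∑ l : Λ, (∫ q, O l q * Real.exp (-U l q) ∂μ) / Za μ U a := by
        refine Finset.sum_congr rfl fun l _ => ?_
        rw [← Finset.mul_sum, ← Finset.sum_div, hK l]
        rw [mul_div_assoc']; rw [mul_one]
    _ = (∑ l : Λ, ∫ q, O l q * Real.exp (-U l q) ∂μ) / Za μ U a :=
        (Finset.sum_div _ _ _).symm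

lemma ee_E0 {Λ Q : Type*} [Fintype Λ] [MeasurableSpace Q]
    (μ : Measure Q) (U : Λ → Q → ℝ) (O : Λ → Q → ℝ) :
    E0 μ U O = (∑ ζ : Λ, ∫ q, O ζ q * Real.exp (-U ζ q) ∂μ) / Z0 μ U := by
  unfold E0 p0
  rw [Finset.sum_div]
  refine Finset.sum_congr rfl fun ζ _ => ?_
  rw [show (fun q => O ζ q * (Real.exp (-U ζ q) / Z0 μ U))
      = fun q => (O ζ q * Real.exp (-U ζ q)) * (Z0 μ U)⁻¹ from
    funext fun q => by rw [div_eq_mul_inv]; ring]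
  rw [integral_mul_const, div_eq_mul_inv]

/-- **Unbiased total expectations from biased sampling.**  With the modified generic
weighing functions `𝕘_a^λ = exp(−a(λ)) g_a^λ` and `𝕘_a = Σ_λ 𝕘_a^λ`,
`E[O] = E_a[(ζ,q) ↦ Σ_λ O(λ,q) 𝕘_a^λ(ζ,q)] / E_a[𝕘_a]`.  In particular, taking
`O(ζ,q) = 1_{ζ=λ}` yields `exp(−A(λ)) = E[1_λ] = E_a[𝕘_a^λ]/E_a[𝕘_a]`, the free
energy along the external parameter. -/
theorem total_expectation_generic_weighing
    {Λ Q : Type*} [Fintype Λ] [Nonempty Λ] [DecidableEq Λ] [MeasurableSpace Q]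
    (μ : Measure Q) [SigmaFinite μ]
    (U : Λ → Q → ℝ) (hU : ∀ ζ, Measurable (U ζ)) (a : Λ → ℝ)
    (hInt : ∀ ζ, Integrable (fun q => Real.exp (a ζ - U ζ q)) μ)
    (hZ : 0 < Za μ U a)
    (hInt0 : ∀ ζ, Integrable (fun q => Real.exp (-U ζ q)) μ)
    (hZ0 : 0 < Z0 μ U)
    (K : Λ → Λ → ℝ) (hK : ∀ l : Λ, ∑ ζ : Λ, K l ζ = 1)
    (O : Λ → Q → ℝ) (hO : ∀ ζ, Measurable (O ζ))
    (hOint : ∀ ζ, Integrable (fun q => O ζ q * Real.exp (-U ζ q)) μ) :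
    E0 μ U O
        = Ea μ U a (fun ζ q => ∑ l : Λ, O l q * gMod μ U a K l ζ q)
            / Ea μ U a (gModT μ U a K)
    ∧ ∀ l : Λ,
        E0 μ U (fun ζ _ => if ζ = l then (1 : ℝ) else 0)
          = Ea μ U a (gMod μ U a K l) / Ea μ U a (gModT μ U a K) := by
  have hZne : Za μ U a ≠ 0 := ne_of_gt hZ
  have hZ0ne : Z0 μ U ≠ 0 := ne_of_gt hZ0
  -- denominator
  have hden : Ea μ U a (gModT μ U a K) = Z0 μ U / Za μ U a := by
    have h1 : gModT μ U a K
        = fun ζ q => ∑ l : Λ, (1 : ℝ) * gMod μ U a K l ζ q := by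
      funext ζ q; simp [gModT]
    rw [h1, ee_key μ U a hZ K hK (fun _ _ => (1 : ℝ))
      (fun ζ => by simpa using hInt0 ζ)]
    simp [Z0]
  have hdenne : Ea μ U a (gModT μ U a K) ≠ 0 := by
    rw [hden]; exact div_ne_zero hZ0ne hZne
  constructor
  · rw [ee_key μ U a hZ K hK O hOint, ee_E0, hden]
    field_simp
  · intro l
    have hO' : ∀ ζ, Integrable
        (fun q => (if ζ = l then (1 : ℝ) else 0) * Real.exp (-U ζ q)) μ := by
      intro ζ
      by_cases h : ζ = l
      · simpa [h] using hInt0 l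
      · simp [h]
    have hnum : Ea μ U a (gMod μ U a K l)
        = (∑ ζ : Λ, ∫ q, (if ζ = l then (1 : ℝ) else 0) * Real.exp (-U ζ q) ∂μ)
            / Za μ U a := by
      have h1 : gMod μ U a K l
          = fun ζ q => ∑ l' : Λ,
              (fun ζ' q' => if ζ' = l then (1 : ℝ) else 0) l' q
                * gMod μ U a K l' ζ q := by
        funext ζ q
        rw [Finset.sum_eq_single l] <;> simp +contextual
      rw [h1, ee_key μ U a hZ K hK _ hO']
    rw [hnum, ee_E0, hden]
    field_simp
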